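/- Let A be the block-diagonal matrix over ℤ/2ℤ with l copies of [1], m₁ copies of [0], and m₂ copies of [[0,1],[1,0]] (so A has size k = l + m₁ + 2m₂). Then det(A) · rank(A) ≡ 1 (mod 2) if and only if m₁ = 0 and l is odd. -/

import Mathlib

def normalFormMatrix (l m₁ m₂ : ℕ) :
    Matrix (Fin l ⊕ (Fin m₁ ⊕ Fin m₂ × Fin 2)) (Fin l ⊕ (Fin m₁ ⊕ Fin m₂ × Fin 2)) (ZMod 2) :=
  fun i j => match i, j with
  | Sum.inl a, Sum.inl b => if a = b then 1 else 0
  | Sum.inr (Sum.inr (a, x)), Sum.inr (Sum.inr (b, y)) => if a = b ∧ x ≠ y then 1 else 0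
  | _, _ => 0

def swPerm (l m₂ : ℕ) : Equiv.Perm (Fin l ⊕ (Fin 0 ⊕ Fin m₂ × Fin 2)) :=
  Equiv.sumCongr (Equiv.refl _)
    (Equiv.sumCongr (Equiv.refl _) (Equiv.prodCongr (Equiv.refl _) (finRotate 2)))

lemma normalFormMatrix_eq_perm (l m₂ : ℕ) :
    normalFormMatrix l 0 m₂ = (swPerm l m₂).permMatrix (ZMod 2) := by
  ext i j
  rw [Equiv.Perm.permMatrix, PEquiv.toMatrix_toPEquiv_eq]
  rcases i with a | b | ⟨a, x⟩ <;> rcases j with b | c | ⟨b, y⟩ <;>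
    simp [normalFormMatrix, swPerm, Matrix.one_apply]
  · exact b.elim0
  · have hxy : (¬x = y) ↔ (x + 1 = y) := by fin_cases x <;> fin_cases y <;> decide
    simp only [hxy]


lemma cast_eq_one_iff_odd (n : ℕ) : (n : ZMod 2) = 1 ↔ Odd n := by
  rw [Nat.odd_iff, show (n : ZMod 2) = ((n % 2 : ℕ) : ZMod 2) from (ZMod.natCast_mod n 2).symm]
  have h : n % 2 = 0 ∨ n % 2 = 1 := by omega
  rcases h with h | h <;> rw [h] <;> decide

theorem normalFormMatrix_det_mul_rank (l m₁ m₂ : ℕ) :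
    (normalFormMatrix l m₁ m₂).det * ((normalFormMatrix l m₁ m₂).rank : ZMod 2) = 1 ↔
      m₁ = 0 ∧ Odd l := by
  rcases Nat.eq_zero_or_pos m₁ with rfl | hm
  · rw [normalFormMatrix_eq_perm]
    have hdet : ((swPerm l m₂).permMatrix (ZMod 2)).det = 1 := by
      rw [Matrix.det_permutation]
      rcases Int.units_eq_one_or (Equiv.Perm.sign (swPerm l m₂)) with h | h <;> rw [h] <;> decide
    have hunit : IsUnit ((swPerm l m₂).permMatrix (ZMod 2)) := by
      rw [Matrix.isUnit_iff_isUnit_det, hdet]; exact isUnit_one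
    rw [hdet, Matrix.rank_of_isUnit _ hunit, one_mul]
    have hcard : Fintype.card (Fin l ⊕ (Fin 0 ⊕ Fin m₂ × Fin 2)) = l + m₂ * 2 := by simp
    rw [hcard]
    have : ((l + m₂ * 2 : ℕ) : ZMod 2) = (l : ZMod 2) := by
      push_cast
      rw [show (2 : ZMod 2) = 0 from rfl, mul_zero, add_zero]
    rw [this, cast_eq_one_iff_odd]
    simp
  · have hdet : (normalFormMatrix l m₁ m₂).det = 0 := by
      apply Matrix.det_eq_zero_of_row_eq_zero (Sum.inr (Sum.inl ⟨0, hm⟩))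
      rintro (a | b | ⟨a, x⟩) <;> rfl
    rw [hdet, zero_mul]
    constructor
    · intro h; exact absurd h (by decide)
    · rintro ⟨h, -⟩; omega
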